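/- Let H be a compact second countable group and (B_j) a Dirac sequence in H. For every Borel set D ⊂ H of positive Haar measure, there exist a Borel subset D' ⊂ D with m_H(D') = m_H(D) and a subsequence (B_{j_k}) such that D' is balanced with respect to (B_{j_k}), i.e., for all s ∈ D', lim_k m_H(D' ∩ sB_{j_k})/m_H(B_{j_k}) = 1. -/

import Mathlib

open MeasureTheory Filter Set
open scoped Pointwise ENNReal Topology

set_option linter.unusedSectionVars false

section Aux

variable {H : Type*} [Group H] [TopologicalSpace H] [IsTopologicalGroup H]
  [CompactSpace H] [SecondCountableTopology H] [MeasurableSpace H] [BorelSpace H]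
  (μ : Measure H) [μ.IsHaarMeasure] [IsProbabilityMeasure μ]

/-- On a compact group, a Haar probability measure is right invariant. -/
lemma bal_map_mul_right (t : H) : Measure.map (· * t) μ = μ := by
  have h2 : IsProbabilityMeasure (Measure.map (· * t) μ) :=
    Measure.isProbabilityMeasure_map (measurable_mul_const t).aemeasurable
  have h3 := Measure.isMulInvariant_eq_smul_of_compactSpace (Measure.map (· * t) μ) μ
  have h4 := congrArg (fun m : Measure H => m Set.univ) h3
  simp only [measure_univ, Measure.smul_apply, smul_eq_mul, mul_one,
    ENNReal.smul_def, eq_comm, ENNReal.coe_eq_one, smul_eq_mul] at h4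
  have h5 : (Measure.map (· * t) μ).haarScalarFactor μ = 1 := by
    exact_mod_cast h4.symm
  rw [h3, h5, one_smul]

lemma bal_preimage_mul_right (t : H) {A : Set H} (hA : MeasurableSet A) :
    μ ((· * t) ⁻¹' A) = μ A := by
  conv_rhs => rw [← bal_map_mul_right μ t]
  rw [Measure.map_apply (measurable_mul_const t) hA]


lemma bal_smul_meas {B : Set H} (hB : MeasurableSet B) (s : H) :
    MeasurableSet (s • B) := by
  have : s • B = (s⁻¹ * ·) ⁻¹' B := by
    ext x; simp [Set.mem_smul_set_iff_inv_smul_mem, smul_eq_mul]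
  rw [this]; exact hB.preimage (measurable_const_mul _)

lemma bal_kernel {D B : Set H} (hD : MeasurableSet D) (hB : MeasurableSet B) (s : H) :
    μ (D ∩ s • B) = ∫⁻ t, D.indicator 1 (s * t) * B.indicator 1 t ∂μ := by
  rw [← lintegral_indicator_one (hD.inter (bal_smul_meas hB s)),
    ← lintegral_mul_left_eq_self (fun x => (D ∩ s • B).indicator 1 x) s]
  congr 1; ext t
  by_cases h1 : s * t ∈ D <;> by_cases h2 : t ∈ B <;>
    simp [Set.indicator_apply, h1, h2, Set.mem_smul_set_iff_inv_smul_mem, smul_eq_mul]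

lemma bal_kernel_meas {D B : Set H} (hD : MeasurableSet D) (hB : MeasurableSet B) :
    Measurable (Function.uncurry fun s t : H =>
      D.indicator (1 : H → ℝ≥0∞) (s * t) * B.indicator 1 t) :=
  by
  have h1 : Measurable (D.indicator (1 : H → ℝ≥0∞)) := measurable_one.indicator hD
  have h2 : Measurable (B.indicator (1 : H → ℝ≥0∞)) := measurable_one.indicator hB
  exact (h1.comp (measurable_fst.mul measurable_snd)).mul (h2.comp measurable_snd)

lemma bal_meas {D B : Set H} (hD : MeasurableSet D) (hB : MeasurableSet B) :
    Measurable fun s : H => μ (D ∩ s • B) := by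
  simp_rw [bal_kernel μ hD hB]
  exact Measurable.lintegral_prod_right (ν := μ)
    (f := fun s t => D.indicator 1 (s * t) * B.indicator 1 t) (bal_kernel_meas hD hB)


lemma bal_swap {C D B : Set H} (hC : MeasurableSet C) (hD : MeasurableSet D)
    (hB : MeasurableSet B) :
    ∫⁻ s, C.indicator 1 s * μ (D ∩ s • B) ∂μ
      = ∫⁻ t, B.indicator 1 t * μ (C ∩ (· * t) ⁻¹' D) ∂μ := by
  have h1 : ∀ s : H, C.indicator (1 : H → ℝ≥0∞) s * μ (D ∩ s • B)
      = ∫⁻ t, C.indicator 1 s * (D.indicator 1 (s * t) * B.indicator 1 t) ∂μ := by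
    intro s
    rw [bal_kernel μ hD hB s, ← lintegral_const_mul _ ?_]
    exact ((measurable_one.indicator hD).comp (measurable_const_mul s)).mul
      (measurable_one.indicator hB)
  have h2 : ∀ t : H, B.indicator (1 : H → ℝ≥0∞) t * μ (C ∩ (· * t) ⁻¹' D)
      = ∫⁻ s, C.indicator 1 s * (D.indicator 1 (s * t) * B.indicator 1 t) ∂μ := by
    intro t
    have hpre : MeasurableSet ((· * t) ⁻¹' D) := hD.preimage (measurable_mul_const t)
    have : μ (C ∩ (· * t) ⁻¹' D) = ∫⁻ s, C.indicator 1 s * D.indicator 1 (s * t) ∂μ := by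
      rw [← lintegral_indicator_one (hC.inter hpre)]
      congr 1; ext s
      by_cases h1 : s ∈ C <;> by_cases h2 : s * t ∈ D <;>
        simp [Set.indicator_apply, h1, h2]
    rw [this, ← lintegral_const_mul _ ?_]
    · congr 1; ext s; ring
    · exact (measurable_one.indicator hC).mul
        ((measurable_one.indicator hD).comp (measurable_mul_const t))
  simp_rw [h1, h2]
  rw [lintegral_lintegral_swap]
  exact (((measurable_one.indicator hC).comp measurable_fst).mul
    (((measurable_one.indicator hD).comp (measurable_fst.mul measurable_snd)).mul
      ((measurable_one.indicator hB).comp measurable_snd))).aemeasurable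

lemma bal_bound {B : Set H} (hB : MeasurableSet B) {F : H → ℝ≥0∞} {ε : ℝ≥0∞}
    (h : ∀ t ∈ B, F t ≤ ε) :
    ∫⁻ t, B.indicator 1 t * F t ∂μ ≤ ε * μ B := by
  calc ∫⁻ t, B.indicator 1 t * F t ∂μ
      ≤ ∫⁻ t, B.indicator (fun _ => ε) t ∂μ := by
        apply lintegral_mono; intro t
        by_cases ht : t ∈ B <;> simp [Set.indicator_apply, ht, h t]
    _ = ε * μ B := by rw [lintegral_indicator_const hB]


lemma bal_cont [T2Space H] {D : Set H} (hD : MeasurableSet D) {ε : ℝ≥0∞} (hε : ε ≠ 0) :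
    ∃ V ∈ 𝓝 (1 : H), ∀ t ∈ V,
      μ (D ∩ ((· * t) ⁻¹' D)ᶜ) ≤ ε ∧ μ (Dᶜ ∩ (· * t) ⁻¹' D) ≤ ε := by
  have hεhalf : ε / 2 ≠ 0 := (ENNReal.half_pos hε).ne'
  obtain ⟨K, hKD, hK, hμK⟩ := hD.exists_isCompact_lt_add (measure_ne_top μ D) hεhalf
  obtain ⟨U, hDU, hUopen, hμU⟩ := D.exists_isOpen_lt_add (measure_ne_top μ D) hεhalf
  have hDK : μ (D \ K) ≤ ε / 2 :=
    (measure_diff_lt_of_lt_add hK.isClosed.nullMeasurableSet hKD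
      (measure_ne_top μ K) hμK).le
  have hUD : μ (U \ D) ≤ ε / 2 :=
    (measure_diff_lt_of_lt_add hD.nullMeasurableSet hDU (measure_ne_top μ D) hμU).le
  obtain ⟨V₁, hV₁, hKV₁⟩ := compact_open_separated_mul_right hK hUopen (hKD.trans hDU)
  refine ⟨V₁ ∩ V₁⁻¹, Filter.inter_mem hV₁ (inv_mem_nhds_one H hV₁), ?_⟩
  rintro t ⟨ht1, ht2⟩
  have ht2' : t⁻¹ ∈ V₁ := Set.mem_inv.1 ht2
  have hUDm : MeasurableSet (U \ D) := hUopen.measurableSet.diff hD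
  have hDKm : MeasurableSet (D \ K) := hD.diff hK.isClosed.measurableSet
  constructor
  · have hsub : D ∩ ((· * t) ⁻¹' D)ᶜ ⊆ (D \ K) ∪ (· * t) ⁻¹' (U \ D) := by
      rintro s ⟨hsD, hst⟩
      by_cases hsK : s ∈ K
      · exact Or.inr ⟨hKV₁ (Set.mul_mem_mul hsK ht1), hst⟩
      · exact Or.inl ⟨hsD, hsK⟩
    calc μ (D ∩ ((· * t) ⁻¹' D)ᶜ) ≤ μ ((D \ K) ∪ (· * t) ⁻¹' (U \ D)) := measure_mono hsub
      _ ≤ μ (D \ K) + μ ((· * t) ⁻¹' (U \ D)) := measure_union_le _ _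
      _ = μ (D \ K) + μ (U \ D) := by rw [bal_preimage_mul_right μ t hUDm]
      _ ≤ ε / 2 + ε / 2 := add_le_add hDK hUD
      _ = ε := ENNReal.add_halves ε
  · have hsub : Dᶜ ∩ (· * t) ⁻¹' D ⊆ (U \ D) ∪ (· * t) ⁻¹' (D \ K) := by
      rintro s ⟨hsD, hst⟩
      by_cases hsK : s * t ∈ K
      · refine Or.inl ⟨?_, hsD⟩
        have : s = (s * t) * t⁻¹ := by group
        rw [this]
        exact hKV₁ (Set.mul_mem_mul hsK ht2')
      · exact Or.inr ⟨hst, hsK⟩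
    calc μ (Dᶜ ∩ (· * t) ⁻¹' D) ≤ μ ((U \ D) ∪ (· * t) ⁻¹' (D \ K)) := measure_mono hsub
      _ ≤ μ (U \ D) + μ ((· * t) ⁻¹' (D \ K)) := measure_union_le _ _
      _ = μ (U \ D) + μ (D \ K) := by rw [bal_preimage_mul_right μ t hDKm]
      _ ≤ ε / 2 + ε / 2 := add_le_add hUD hDK
      _ = ε := ENNReal.add_halves ε

lemma bal_I_small [T2Space H] {D : Set H} (hD : MeasurableSet D)
    {B : ℕ → Set H} (hclosed : ∀ j, IsClosed (B j)) (hanti : Antitone B)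
    (hinter : ⋂ j, B j = {1}) {ε : ℝ≥0∞} (hε : ε ≠ 0) :
    ∃ N, ∀ j ≥ N, (∫⁻ s, (D.indicator 1 s * μ (Dᶜ ∩ s • B j)
        + Dᶜ.indicator 1 s * μ (D ∩ s • B j)) ∂μ) / μ (B j) ≤ ε := by
  have hεhalf : ε / 2 ≠ 0 := (ENNReal.half_pos hε).ne'
  obtain ⟨V, hV, hVbound⟩ := bal_cont μ hD hεhalf
  obtain ⟨W, hWV, hWopen, hW1⟩ := mem_nhds_iff.1 hV
  obtain ⟨j₀, hj₀⟩ : ∃ j₀, B 0 ∩ (B j₀ ∩ Wᶜ) = ∅ := by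
    apply (hclosed 0).isCompact.elim_directed_family_closed
      (fun j => B j ∩ Wᶜ) (fun j => (hclosed j).inter hWopen.isClosed_compl)
    · have heq : ⋂ j, (B j ∩ Wᶜ) = (⋂ j, B j) ∩ Wᶜ := (Set.iInter_inter _ _).symm
      rw [heq, hinter]
      apply Set.eq_empty_iff_forall_notMem.2
      rintro x ⟨_, hx1, hxW⟩
      rw [Set.mem_singleton_iff] at hx1
      subst hx1
      exact hxW hW1
    · intro i j
      exact ⟨max i j, Set.inter_subset_inter (hanti (le_max_left i j)) subset_rfl,
        Set.inter_subset_inter (hanti (le_max_right i j)) subset_rfl⟩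
  have hBW : B j₀ ⊆ W := by
    intro x hx
    by_contra hxW
    have : x ∈ B 0 ∩ (B j₀ ∩ Wᶜ) := ⟨hanti (Nat.zero_le j₀) hx, hx, hxW⟩
    rw [hj₀] at this
    exact this
  refine ⟨j₀, fun j hj => ?_⟩
  have hBj : ∀ t ∈ B j, t ∈ V := fun t ht => hWV (hBW (hanti hj ht))
  have hBm : MeasurableSet (B j) := (hclosed j).measurableSet
  have hm1 : Measurable fun s : H => D.indicator 1 s * μ (Dᶜ ∩ s • B j) :=
    (measurable_one.indicator hD).mul (bal_meas μ hD.compl hBm)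
  have hsplit : (∫⁻ s, (D.indicator 1 s * μ (Dᶜ ∩ s • B j)
        + Dᶜ.indicator 1 s * μ (D ∩ s • B j)) ∂μ)
      = (∫⁻ s, D.indicator 1 s * μ (Dᶜ ∩ s • B j) ∂μ)
        + ∫⁻ s, Dᶜ.indicator 1 s * μ (D ∩ s • B j) ∂μ :=
    lintegral_add_left hm1 _
  have h1 : (∫⁻ s, D.indicator 1 s * μ (Dᶜ ∩ s • B j) ∂μ) ≤ ε / 2 * μ (B j) := by
    rw [bal_swap μ hD hD.compl hBm]
    simp_rw [Set.preimage_compl]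
    exact bal_bound μ hBm (fun t ht => (hVbound t (hBj t ht)).1)
  have h2 : (∫⁻ s, Dᶜ.indicator 1 s * μ (D ∩ s • B j) ∂μ) ≤ ε / 2 * μ (B j) := by
    rw [bal_swap μ hD.compl hD hBm]
    exact bal_bound μ hBm (fun t ht => (hVbound t (hBj t ht)).2)
  calc (∫⁻ s, (D.indicator 1 s * μ (Dᶜ ∩ s • B j)
        + Dᶜ.indicator 1 s * μ (D ∩ s • B j)) ∂μ) / μ (B j)
      ≤ (ε / 2 * μ (B j) + ε / 2 * μ (B j)) / μ (B j) := by
        rw [hsplit]; exact ENNReal.div_le_div_right (add_le_add h1 h2) _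
    _ = (ε * μ (B j)) / μ (B j) := by rw [← add_mul, ENNReal.add_halves]
    _ = ε * (μ (B j) / μ (B j)) := by rw [mul_div_assoc]
    _ ≤ ε * 1 := mul_le_mul_right ENNReal.div_self_le_one ε
    _ = ε := mul_one ε

end Aux

/-- Given a Dirac sequence `(B j)` in a compact second countable group `H` and a Borel
set `D` of positive Haar measure, there exist a Borel subset `D' ⊆ D` of full relative
measure and a subsequence `(B (φ k))` with respect to which `D'` is balanced:
`m(D' ∩ sB_{φ k})/m(B_{φ k}) → 1` for every `s ∈ D'`. -/
theorem exists_balanced_subset {H : Type*} [Group H] [TopologicalSpace H]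
    [IsTopologicalGroup H] [CompactSpace H] [SecondCountableTopology H]
    [MeasurableSpace H] [BorelSpace H]
    (μ : Measure H) [μ.IsHaarMeasure] [IsProbabilityMeasure μ]
    (B : ℕ → Set H) (hclosed : ∀ j, IsClosed (B j)) (hanti : Antitone B)
    (hinter : ⋂ j, B j = {1}) (hpos : ∀ j, 0 < μ (B j))
    (D : Set H) (hD : MeasurableSet D) (hDpos : 0 < μ D) :
    ∃ D' : Set H, D' ⊆ D ∧ MeasurableSet D' ∧ μ D' = μ D ∧
      ∃ φ : ℕ → ℕ, StrictMono φ ∧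
        ∀ s ∈ D',
          Tendsto (fun k => (μ (D' ∩ s • B (φ k))).toReal / (μ (B (φ k))).toReal)
            atTop (nhds 1) := by
  have hone : IsClosed ({1} : Set H) := hinter ▸ isClosed_iInter hclosed
  haveI : T1Space H := IsTopologicalGroup.t1Space H hone
  haveI : T2Space H := by
    rw [IsTopologicalGroup.t2Space_iff_one_closed]; exact hone
  have hBm : ∀ j, MeasurableSet (B j) := fun j => (hclosed j).measurableSet
  set e : ℕ → H → ℝ≥0∞ := fun j s =>
    (D.indicator 1 s * μ (Dᶜ ∩ s • B j) + Dᶜ.indicator 1 s * μ (D ∩ s • B j)) / μ (B j)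
    with he
  have hnummeas : ∀ j, Measurable (fun s : H =>
      D.indicator 1 s * μ (Dᶜ ∩ s • B j) + Dᶜ.indicator 1 s * μ (D ∩ s • B j)) := fun j =>
    ((measurable_one.indicator hD).mul (bal_meas μ hD.compl (hBm j))).add
      ((measurable_one.indicator hD.compl).mul (bal_meas μ hD (hBm j)))
  have hemeas : ∀ j, Measurable (e j) := fun j => (hnummeas j).div_const _
  have hIe : ∀ j, ∫⁻ s, e j s ∂μ
      = (∫⁻ s, (D.indicator 1 s * μ (Dᶜ ∩ s • B j)
          + Dᶜ.indicator 1 s * μ (D ∩ s • B j)) ∂μ) / μ (B j) := by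
    intro j
    simp only [he, div_eq_mul_inv]
    exact lintegral_mul_const' _ _ (by simp [(hpos j).ne'])
  obtain ⟨φ, hφmono, hφ⟩ : ∃ φ : ℕ → ℕ, StrictMono φ ∧
      ∀ k, ∫⁻ s, e (φ k) s ∂μ ≤ (2⁻¹ : ℝ≥0∞) ^ k := by
    apply extraction_forall_of_eventually'
      (P := fun n k => ∫⁻ s, e k s ∂μ ≤ (2⁻¹ : ℝ≥0∞) ^ n)
    intro n
    obtain ⟨N, hN⟩ := bal_I_small μ hD hclosed hanti hinter
      (ε := (2⁻¹ : ℝ≥0∞) ^ n) (pow_ne_zero n (by simp))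
    exact ⟨N, fun k hk => (hIe k) ▸ hN k hk⟩
  have hae : ∀ᵐ s ∂μ, Tendsto (fun k => e (φ k) s) atTop (𝓝 0) := by
    have hlt : ∫⁻ s, ∑' k, e (φ k) s ∂μ < ⊤ := by
      rw [lintegral_tsum (fun k => (hemeas (φ k)).aemeasurable)]
      calc ∑' k, ∫⁻ s, e (φ k) s ∂μ ≤ ∑' k, (2⁻¹ : ℝ≥0∞) ^ k := ENNReal.tsum_le_tsum hφ
        _ = (1 - 2⁻¹)⁻¹ := ENNReal.tsum_geometric _
        _ < ⊤ := by
            rw [ENNReal.one_sub_inv_two]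
            simp
    filter_upwards [ae_lt_top (Measurable.ennreal_tsum fun k => hemeas (φ k)) hlt.ne]
      with s hs
    exact ENNReal.tendsto_atTop_zero_of_tsum_ne_top hs.ne
  set N := toMeasurable μ {s | ¬ Tendsto (fun k => e (φ k) s) atTop (𝓝 0)} with hNdef
  have hNnull : μ N = 0 := by
    rw [hNdef, measure_toMeasurable]
    exact ae_iff.1 hae
  have hNm : MeasurableSet N := measurableSet_toMeasurable μ _
  refine ⟨D \ N, Set.diff_subset, hD.diff hNm, measure_diff_null hNnull, φ, hφmono, ?_⟩
  rintro s ⟨hsD, hsN⟩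
  have hconv : Tendsto (fun k => e (φ k) s) atTop (𝓝 0) := by
    by_contra hcon
    exact hsN (subset_toMeasurable μ _ hcon)
  have hμeq : ∀ j, μ ((D \ N) ∩ s • B j) = μ (D ∩ s • B j) := by
    intro j
    have hset : (D \ N) ∩ s • B j = (D ∩ s • B j) \ N := by
      ext x; simp only [Set.mem_inter_iff, Set.mem_diff]; tauto
    rw [hset, measure_diff_null hNnull]
  have hsmul : ∀ j, μ (s • B j) = μ (B j) := by
    intro j
    have hset : s • B j = (s⁻¹ * ·) ⁻¹' B j := by
      ext x; simp [Set.mem_smul_set_iff_inv_smul_mem, smul_eq_mul]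
    rw [hset, measure_preimage_mul]
  have habc : ∀ j, μ (D ∩ s • B j) + μ (Dᶜ ∩ s • B j) = μ (B j) := by
    intro j
    have h1 : μ (s • B j ∩ D) + μ (s • B j \ D) = μ (s • B j) :=
      measure_inter_add_diff _ hD
    rw [← hsmul j, ← h1, Set.inter_comm, Set.diff_eq, Set.inter_comm (s • B j),
      Set.inter_comm Dᶜ (s • B j)]
  have hse : ∀ j, e j s = μ (Dᶜ ∩ s • B j) / μ (B j) := by
    intro j
    have hsDc : s ∉ Dᶜ := by simp [hsD]
    simp [he, Set.indicator_of_mem hsD, Set.indicator_of_notMem hsDc]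
  have hkey : ∀ j, (μ (D ∩ s • B j)).toReal / (μ (B j)).toReal = 1 - (e j s).toReal := by
    intro j
    have hbne : (μ (B j)).toReal ≠ 0 :=
      (ENNReal.toReal_pos (hpos j).ne' (measure_ne_top μ _)).ne'
    have hadd : (μ (D ∩ s • B j)).toReal + (μ (Dᶜ ∩ s • B j)).toReal = (μ (B j)).toReal := by
      rw [← ENNReal.toReal_add (measure_ne_top μ _) (measure_ne_top μ _), habc j]
    rw [hse j, ENNReal.toReal_div]
    field_simp
    linarith [hadd]
  have htoReal : Tendsto (fun k => (e (φ k) s).toReal) atTop (𝓝 0) := by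
    have := (ENNReal.tendsto_toReal (a := 0) (by simp)).comp hconv
    exact this
  have hfinal : Tendsto (fun k => 1 - (e (φ k) s).toReal) atTop (𝓝 1) := by
    have := tendsto_const_nhds (x := (1:ℝ)) (f := atTop).sub htoReal
    simpa using this
  refine Tendsto.congr (fun k => ?_) hfinal
  rw [hμeq (φ k), hkey (φ k)]
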